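/- Riesz–Kantorovich formula for pointwise join of linear maps: if J₁, J₂ are cones with joins and L₁, L₂: J₁ → J₂ are additive and positively homogeneous, then the map L defined by L(v) := sup{L₁(v₁) + L₂(v₂) : v₁ + v₂ = v} is additive and positively homogeneous, and is the least linear upper bound of L₁ and L₂ in the pointwise order. -/

import Mathlib

open scoped NNReal

/-- A map between wedges is (cone-)linear if it preserves nonnegative linear combinations. -/
def IsConeLinear {J₁ J₂ : Type*} [AddCommMonoid J₁] [Module ℝ≥0 J₁]
    [AddCommMonoid J₂] [Module ℝ≥0 J₂] (L : J₁ → J₂) : Prop :=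
  ∀ (a b : ℝ≥0) (v w : J₁), L (a • v + b • w) = a • L v + b • L w

section ConeLemmas

set_option linter.unusedSectionVars false

variable {J : Type*} [CompleteLattice J] [AddCommMonoid J] [Module ℝ≥0 J]

private lemma c_zero_le (hle : ∀ x y : J, x ≤ y ↔ ∃ z, x + z = y) (y : J) : (0:J) ≤ y :=
  (hle 0 y).2 ⟨y, zero_add y⟩

private lemma c_le_add_right (hle : ∀ x y : J, x ≤ y ↔ ∃ z, x + z = y) (x z : J) :
    x ≤ x + z :=
  (hle x (x + z)).2 ⟨z, rfl⟩

private lemma c_le_add_left (hle : ∀ x y : J, x ≤ y ↔ ∃ z, x + z = y) (x z : J) :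
    x ≤ z + x :=
  (hle x (z + x)).2 ⟨z, add_comm x z⟩

private lemma c_add_le_add (hle : ∀ x y : J, x ≤ y ↔ ∃ z, x + z = y)
    {x y u v : J} (h1 : x ≤ y) (h2 : u ≤ v) : x + u ≤ y + v := by
  obtain ⟨a, ha⟩ := (hle x y).1 h1
  obtain ⟨b, hb⟩ := (hle u v).1 h2
  refine (hle _ _).2 ⟨a + b, ?_⟩
  rw [← ha, ← hb]; abel

private lemma c_smul_le_smul (hle : ∀ x y : J, x ≤ y ↔ ∃ z, x + z = y)
    (c : ℝ≥0) {x y : J} (h : x ≤ y) : c • x ≤ c • y := by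
  obtain ⟨a, ha⟩ := (hle x y).1 h
  exact (hle _ _).2 ⟨c • a, by rw [← smul_add, ha]⟩

private lemma c_smul_le_smul_left (hle : ∀ x y : J, x ≤ y ↔ ∃ z, x + z = y)
    {c d : ℝ≥0} (h : c ≤ d) (x : J) : c • x ≤ d • x :=
  (hle _ _).2 ⟨(d - c) • x, by rw [← add_smul, add_tsub_cancel_of_le h]⟩

private lemma c_smul_le_self (hle : ∀ x y : J, x ≤ y ↔ ∃ z, x + z = y)
    {η : ℝ≥0} (hη : η ≤ 1) (x : J) : η • x ≤ x := by
  have := c_smul_le_smul_left hle hη x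
  rwa [one_smul] at this

private lemma c_le_of_forall (hscale : ∀ v : J, IsLUB {w | ∃ η : ℝ≥0, η < 1 ∧ w = η • v} v)
    {x y : J} (h : ∀ η : ℝ≥0, η < 1 → η • x ≤ y) : x ≤ y :=
  (hscale x).2 (by rintro w ⟨η, hη, rfl⟩; exact h η hη)

private lemma c_exists_inv_le {δ : ℝ≥0} (hδ : 0 < δ) : ∃ n : ℕ, ((n : ℝ≥0) + 1)⁻¹ ≤ δ := by
  obtain ⟨n, hn⟩ := exists_nat_gt (δ⁻¹)
  refine ⟨n, ?_⟩
  have h1 : δ⁻¹ ≤ (n : ℝ≥0) + 1 := le_trans hn.le le_self_add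
  rw [← inv_inv δ]
  gcongr

private lemma c_cancel (hle : ∀ x y : J, x ≤ y ↔ ∃ z, x + z = y)
    {x y w : J} (h : x + y ≤ x + w) (n : ℕ) :
    y ≤ w + ((n : ℝ≥0) + 1)⁻¹ • x := by
  have key : ∀ m : ℕ, x + ((m : ℝ≥0) + 1) • y ≤ x + ((m : ℝ≥0) + 1) • w := by
    intro m
    induction m with
    | zero => simpa using h
    | succ m ih =>
      have e1 : ∀ z : J, x + (((m + 1 : ℕ) : ℝ≥0) + 1) • z = (x + z) + ((m : ℝ≥0) + 1) • z := by
        intro z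
        push_cast
        rw [show ((m : ℝ≥0) + 1 + 1) = ((m : ℝ≥0) + 1) + 1 from by ring, add_smul, one_smul]
        abel
      rw [e1 y, e1 w]
      calc (x + y) + ((m : ℝ≥0) + 1) • y = y + (x + ((m : ℝ≥0) + 1) • y) := by abel
        _ ≤ y + (x + ((m : ℝ≥0) + 1) • w) := c_add_le_add hle le_rfl ih
        _ = (x + y) + ((m : ℝ≥0) + 1) • w := by abel
        _ ≤ (x + w) + ((m : ℝ≥0) + 1) • w := c_add_le_add hle h le_rfl
  have hne : ((n : ℝ≥0) + 1) ≠ 0 := by positivity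
  have h2 := c_smul_le_smul hle (((n : ℝ≥0) + 1)⁻¹) (key n)
  rw [smul_add, smul_add, smul_smul, smul_smul, inv_mul_cancel₀ hne, one_smul, one_smul] at h2
  calc y ≤ ((n : ℝ≥0) + 1)⁻¹ • x + y := c_le_add_left hle _ _
    _ ≤ ((n : ℝ≥0) + 1)⁻¹ • x + w := h2
    _ = w + ((n : ℝ≥0) + 1)⁻¹ • x := add_comm _ _

private lemma c_diff (hle : ∀ x y : J, x ≤ y ↔ ∃ z, x + z = y)
    (hinf : ∀ (v : J) (A : Set J), sInf ((fun a => v + a) '' A) = v + sInf A)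
    {x y : J} (h : x ≤ y) : x + sInf {z | y ≤ x + z} = y := by
  obtain ⟨z₀, hz₀⟩ := (hle x y).1 h
  rw [← hinf]
  apply le_antisymm
  · exact sInf_le ⟨z₀, le_of_eq hz₀.symm, hz₀⟩
  · refine le_sInf ?_
    rintro b ⟨t, ht, rfl⟩
    exact ht

private lemma c_add_inf (hinf : ∀ (v : J) (A : Set J), sInf ((fun a => v + a) '' A) = v + sInf A)
    (c a b : J) : c + (a ⊓ b) = (c + a) ⊓ (c + b) := by
  have h := hinf c {a, b}
  simp only [Set.image_insert_eq, Set.image_singleton, sInf_insert, sInf_singleton,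
    sInf_pair] at h
  exact h.symm

private lemma c_add_i (hle : ∀ x y : J, x ≤ y ↔ ∃ z, x + z = y)
    (hscale : ∀ v : J, IsLUB {w | ∃ η : ℝ≥0, η < 1 ∧ w = η • v} v)
    (x : J) :
    x + (⨅ n : ℕ, ((n : ℝ≥0) + 1)⁻¹ • x) = x := by
  apply le_antisymm
  · apply c_le_of_forall hscale
    intro η hη
    obtain ⟨n, hn⟩ := c_exists_inv_le (tsub_pos_of_lt hη)
    have h1 : (⨅ m : ℕ, ((m : ℝ≥0) + 1)⁻¹ • x) ≤ ((n : ℝ≥0) + 1)⁻¹ • x := iInf_le _ n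
    calc η • (x + ⨅ m : ℕ, ((m : ℝ≥0) + 1)⁻¹ • x)
        = η • x + η • (⨅ m : ℕ, ((m : ℝ≥0) + 1)⁻¹ • x) := smul_add _ _ _
      _ ≤ η • x + ((n : ℝ≥0) + 1)⁻¹ • x :=
          c_add_le_add hle le_rfl (le_trans (c_smul_le_self hle hη.le _) h1)
      _ = (η + ((n : ℝ≥0) + 1)⁻¹) • x := (add_smul _ _ _).symm
      _ ≤ (1 : ℝ≥0) • x := by
          apply c_smul_le_smul_left hle
          calc η + ((n : ℝ≥0) + 1)⁻¹ ≤ η + (1 - η) := add_le_add_right hn η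
            _ = 1 := add_tsub_cancel_of_le hη.le
      _ = x := one_smul _ _
  · exact c_le_add_right hle x _

private lemma c_sSup_add_le (hle : ∀ x y : J, x ≤ y ↔ ∃ z, x + z = y)
    (hscale : ∀ v : J, IsLUB {w | ∃ η : ℝ≥0, η < 1 ∧ w = η • v} v)
    {A : Set J} (hA : A.Nonempty) {b c : J}
    (h : ∀ a ∈ A, a + b ≤ c) : sSup A + b ≤ c := by
  obtain ⟨a₀, ha₀⟩ := hA
  have hbc : b ≤ c := le_trans (c_le_add_left hle b a₀) (h a₀ ha₀)
  obtain ⟨w, hw⟩ := (hle b c).1 hbc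
  apply c_le_of_forall hscale
  intro η hη
  obtain ⟨n, hn⟩ := c_exists_inv_le (tsub_pos_of_lt hη)
  have hsA : sSup A ≤ w + ((n : ℝ≥0) + 1)⁻¹ • b := by
    apply sSup_le
    intro a ha
    have h2 : b + a ≤ b + w := by
      rw [hw]
      calc b + a = a + b := add_comm _ _
        _ ≤ c := h a ha
    exact c_cancel hle h2 n
  calc η • (sSup A + b) = η • sSup A + η • b := smul_add _ _ _
    _ ≤ (w + ((n : ℝ≥0) + 1)⁻¹ • b) + η • b :=
        c_add_le_add hle (le_trans (c_smul_le_self hle hη.le _) hsA) le_rfl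
    _ = w + (((n : ℝ≥0) + 1)⁻¹ + η) • b := by rw [add_smul]; abel
    _ ≤ w + (1 : ℝ≥0) • b := by
        apply c_add_le_add hle le_rfl
        apply c_smul_le_smul_left hle
        calc ((n : ℝ≥0) + 1)⁻¹ + η ≤ (1 - η) + η := add_le_add_left hn η
          _ = 1 := tsub_add_cancel_of_le hη.le
    _ = w + b := by rw [one_smul]
    _ = c := by rw [add_comm, hw]

end ConeLemmas

theorem stmt11 {J₁ J₂ : Type*}
    [CompleteLattice J₁] [AddCommMonoid J₁] [Module ℝ≥0 J₁]
    [CompleteLattice J₂] [AddCommMonoid J₂] [Module ℝ≥0 J₂]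
    (hle₁ : ∀ x y : J₁, x ≤ y ↔ ∃ z, x + z = y)
    (hscale₁ : ∀ v : J₁, IsLUB {w | ∃ η : ℝ≥0, η < 1 ∧ w = η • v} v)
    (hinf₁ : ∀ (v : J₁) (A : Set J₁), sInf ((fun a => v + a) '' A) = v + sInf A)
    (hle₂ : ∀ x y : J₂, x ≤ y ↔ ∃ z, x + z = y)
    (hscale₂ : ∀ v : J₂, IsLUB {w | ∃ η : ℝ≥0, η < 1 ∧ w = η • v} v)
    (hinf₂ : ∀ (v : J₂) (A : Set J₂), sInf ((fun a => v + a) '' A) = v + sInf A)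
    (L₁ L₂ : J₁ → J₂) (hL₁ : IsConeLinear L₁) (hL₂ : IsConeLinear L₂)
    (L : J₁ → J₂)
    (hLdef : ∀ v : J₁, L v = sSup {z | ∃ v₁ v₂ : J₁, v₁ + v₂ = v ∧ z = L₁ v₁ + L₂ v₂}) :
    IsConeLinear L ∧ (∀ v, L₁ v ≤ L v) ∧ (∀ v, L₂ v ≤ L v) ∧
      ∀ M : J₁ → J₂, IsConeLinear M → (∀ v, L₁ v ≤ M v) → (∀ v, L₂ v ≤ M v) →
        ∀ v, L v ≤ M v := by
  -- linearity facts for L₁, L₂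
  have hL₁add : ∀ u v : J₁, L₁ (u + v) = L₁ u + L₁ v := by
    intro u v; have := hL₁ 1 1 u v; simpa using this
  have hL₂add : ∀ u v : J₁, L₂ (u + v) = L₂ u + L₂ v := by
    intro u v; have := hL₂ 1 1 u v; simpa using this
  have hL₁smul : ∀ (c : ℝ≥0) (v : J₁), L₁ (c • v) = c • L₁ v := by
    intro c v; have := hL₁ c 0 v v; simpa using this
  have hL₂smul : ∀ (c : ℝ≥0) (v : J₁), L₂ (c • v) = c • L₂ v := by
    intro c v; have := hL₂ c 0 v v; simpa using this
  have hL₁zero : L₁ 0 = 0 := by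
    have := hL₁smul 0 0; simpa using this
  have hL₂zero : L₂ 0 = 0 := by
    have := hL₂smul 0 0; simpa using this
  -- basic facts about L
  have hmem : ∀ {v v₁ v₂ : J₁}, v₁ + v₂ = v → L₁ v₁ + L₂ v₂ ≤ L v := by
    intro v v₁ v₂ h
    rw [hLdef v]
    exact le_sSup ⟨v₁, v₂, h, rfl⟩
  have hub₁ : ∀ v, L₁ v ≤ L v := by
    intro v
    have := hmem (add_zero v)
    rwa [hL₂zero, add_zero] at this
  have hub₂ : ∀ v, L₂ v ≤ L v := by
    intro v
    have := hmem (zero_add v)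
    rwa [hL₁zero, zero_add] at this
  have hmono : ∀ {a b : J₁}, a ≤ b → L a ≤ L b := by
    intro a b hab
    obtain ⟨d, hd⟩ := (hle₁ a b).1 hab
    rw [hLdef a]
    apply sSup_le
    rintro z ⟨a₁, a₂, ha, rfl⟩
    have hmem2 : L₁ (a₁ + d) + L₂ a₂ ≤ L b := hmem (by rw [← hd, ← ha]; abel)
    refine le_trans ?_ hmem2
    rw [hL₁add]
    exact c_add_le_add hle₂ (c_le_add_right hle₂ _ _) le_rfl
  have hL0 : L 0 = 0 := by
    apply le_antisymm
    · rw [hLdef 0]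
      apply sSup_le
      rintro z ⟨v₁, v₂, h, rfl⟩
      have h1 : v₁ = 0 := le_antisymm ((hle₁ v₁ 0).2 ⟨v₂, h⟩) (c_zero_le hle₁ v₁)
      have h2 : v₂ = 0 := by rw [h1, zero_add] at h; exact h
      rw [h1, h2, hL₁zero, hL₂zero, add_zero]
    · exact c_zero_le hle₂ _
  -- homogeneity
  have hhom : ∀ (c : ℝ≥0) (v : J₁), L (c • v) = c • L v := by
    intro c v
    rcases eq_or_ne c 0 with rfl | hc
    · rw [zero_smul, zero_smul, hL0]
    · have hSet : {z | ∃ v₁ v₂ : J₁, v₁ + v₂ = c • v ∧ z = L₁ v₁ + L₂ v₂}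
          = (fun z => c • z) '' {z | ∃ v₁ v₂ : J₁, v₁ + v₂ = v ∧ z = L₁ v₁ + L₂ v₂} := by
        ext z
        constructor
        · rintro ⟨v₁, v₂, h, rfl⟩
          refine ⟨L₁ (c⁻¹ • v₁) + L₂ (c⁻¹ • v₂), ⟨c⁻¹ • v₁, c⁻¹ • v₂, ?_, rfl⟩, ?_⟩
          · rw [← smul_add, h, smul_smul, inv_mul_cancel₀ hc, one_smul]
          · simp only [hL₁smul, hL₂smul, smul_add, smul_smul, mul_inv_cancel₀ hc, one_smul]
        · rintro ⟨z, ⟨v₁, v₂, h, rfl⟩, rfl⟩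
          exact ⟨c • v₁, c • v₂, by rw [← smul_add, h],
            by simp only [hL₁smul, hL₂smul, smul_add]⟩
      rw [hLdef (c • v), hLdef v, hSet]
      apply le_antisymm
      · apply sSup_le
        rintro z ⟨z', hz', rfl⟩
        exact c_smul_le_smul hle₂ c (le_sSup hz')
      · have h1 : sSup {z | ∃ v₁ v₂ : J₁, v₁ + v₂ = v ∧ z = L₁ v₁ + L₂ v₂}
            ≤ c⁻¹ • sSup ((fun z => c • z) ''
              {z | ∃ v₁ v₂ : J₁, v₁ + v₂ = v ∧ z = L₁ v₁ + L₂ v₂}) := by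
          apply sSup_le
          intro z hz
          have h2 : c • z ≤ sSup ((fun z => c • z) ''
              {z | ∃ v₁ v₂ : J₁, v₁ + v₂ = v ∧ z = L₁ v₁ + L₂ v₂}) :=
            le_sSup ⟨z, hz, rfl⟩
          have h3 := c_smul_le_smul hle₂ c⁻¹ h2
          rwa [smul_smul, inv_mul_cancel₀ hc, one_smul] at h3
        have h4 := c_smul_le_smul hle₂ c h1
        rwa [smul_smul, mul_inv_cancel₀ hc, one_smul] at h4
  -- superadditivity
  have hSne : ∀ v : J₁, Set.Nonempty {z | ∃ v₁ v₂ : J₁, v₁ + v₂ = v ∧ z = L₁ v₁ + L₂ v₂} :=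
    fun v => ⟨L₁ v + L₂ 0, v, 0, add_zero v, rfl⟩
  have hsuper : ∀ v w : J₁, L v + L w ≤ L (v + w) := by
    intro v w
    rw [hLdef v]
    apply c_sSup_add_le hle₂ hscale₂ (hSne v)
    rintro z ⟨v₁, v₂, hv, rfl⟩
    rw [add_comm, hLdef w]
    apply c_sSup_add_le hle₂ hscale₂ (hSne w)
    rintro z' ⟨w₁, w₂, hw, rfl⟩
    have e : L₁ (w₁ + v₁) + L₂ (w₂ + v₂) = (L₁ w₁ + L₂ w₂) + (L₁ v₁ + L₂ v₂) := by
      rw [hL₁add, hL₂add]; abel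
    rw [← e]
    exact hmem (by rw [show w₁ + v₁ + (w₂ + v₂) = (w₁ + w₂) + (v₁ + v₂) from by abel,
      hv, hw, add_comm])
  -- the peel (Riesz decomposition) lemma
  have hpeel : ∀ A B : J₁, L (A + B) ≤ L A + L (B + ⨅ n : ℕ, ((n : ℝ≥0) + 1)⁻¹ • A) := by
    intro A B
    rw [hLdef (A + B)]
    apply sSup_le
    rintro z ⟨u₁, u₂, hu, rfl⟩
    have hz11A : u₁ ⊓ A ≤ A := inf_le_right
    have hz11u : u₁ ⊓ A ≤ u₁ := inf_le_left
    have hz21 : (u₁ ⊓ A) + sInf {t | A ≤ (u₁ ⊓ A) + t} = A := c_diff hle₁ hinf₁ hz11A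
    set z₂₁ := sInf {t | A ≤ (u₁ ⊓ A) + t} with hz21def
    have hz21u : z₂₁ ≤ u₂ := by
      apply sInf_le
      show A ≤ (u₁ ⊓ A) + u₂
      calc A ≤ (u₂ + u₁) ⊓ (u₂ + A) := by
            apply le_inf
            · rw [add_comm u₂ u₁, hu]
              exact c_le_add_right hle₁ A B
            · exact c_le_add_left hle₁ A u₂
        _ = u₂ + (u₁ ⊓ A) := (c_add_inf hinf₁ u₂ u₁ A).symm
        _ = (u₁ ⊓ A) + u₂ := add_comm _ _
    obtain ⟨z₁₂, hz12⟩ := (hle₁ (u₁ ⊓ A) u₁).1 hz11u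
    obtain ⟨z₂₂, hz22⟩ := (hle₁ z₂₁ u₂).1 hz21u
    have hQ : A + (z₁₂ + z₂₂) = A + B := by
      calc A + (z₁₂ + z₂₂) = ((u₁ ⊓ A) + z₂₁) + (z₁₂ + z₂₂) := by rw [hz21]
        _ = ((u₁ ⊓ A) + z₁₂) + (z₂₁ + z₂₂) := by abel
        _ = u₁ + u₂ := by rw [hz12, hz22]
        _ = A + B := hu
    have hQle : z₁₂ + z₂₂ ≤ B + ⨅ n : ℕ, ((n : ℝ≥0) + 1)⁻¹ • A := by
      have h7 : z₁₂ + z₂₂ ≤ sInf ((fun a => B + a) ''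
          Set.range (fun n : ℕ => ((n : ℝ≥0) + 1)⁻¹ • A)) := by
        apply le_sInf
        rintro b ⟨_, ⟨n, rfl⟩, rfl⟩
        exact c_cancel hle₁ (le_of_eq hQ) n
      rwa [hinf₁, sInf_range] at h7
    have e : L₁ u₁ + L₂ u₂ = (L₁ (u₁ ⊓ A) + L₂ z₂₁) + (L₁ z₁₂ + L₂ z₂₂) := by
      conv_lhs => rw [← hz12, ← hz22]
      rw [hL₁add, hL₂add]; abel
    rw [e]
    apply c_add_le_add hle₂
    · exact hmem hz21
    · exact le_trans (hmem rfl) (hmono hQle)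
  -- monotonicity of L₁, L₂
  have hL₁mono : ∀ {a b : J₁}, a ≤ b → L₁ a ≤ L₁ b := by
    intro a b hab
    obtain ⟨d, hd⟩ := (hle₁ a b).1 hab
    rw [← hd, hL₁add]
    exact c_le_add_right hle₂ _ _
  have hL₂mono : ∀ {a b : J₁}, a ≤ b → L₂ a ≤ L₂ b := by
    intro a b hab
    obtain ⟨d, hd⟩ := (hle₁ a b).1 hab
    rw [← hd, hL₂add]
    exact c_le_add_right hle₂ _ _
  -- additivity
  have hadd : ∀ v w : J₁, L (v + w) = L v + L w := by
    intro v w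
    refine le_antisymm ?_ (hsuper v w)
    have hF2G : L (v + w) ≤ (L v + L w) + (L v + L w) := by
      rw [hLdef (v + w)]
      apply sSup_le
      rintro z ⟨u₁, u₂, hu, rfl⟩
      have h1 : L₁ u₁ ≤ L v + L w := by
        have h0 : L₁ u₁ ≤ L₁ (v + w) := hL₁mono ((hle₁ _ _).2 ⟨u₂, hu⟩)
        rw [hL₁add] at h0
        exact le_trans h0 (c_add_le_add hle₂ (hub₁ v) (hub₁ w))
      have h2 : L₂ u₂ ≤ L v + L w := by
        have h0 : L₂ u₂ ≤ L₂ (v + w) :=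
          hL₂mono ((hle₁ _ _).2 ⟨u₁, by rw [add_comm]; exact hu⟩)
        rw [hL₂add] at h0
        exact le_trans h0 (c_add_le_add hle₂ (hub₂ v) (hub₂ w))
      exact c_add_le_add hle₂ h1 h2
    have hp1 : L (v + w) ≤ L v + L (w + ⨅ n : ℕ, ((n : ℝ≥0) + 1)⁻¹ • v) := hpeel v w
    have hp2 : L (w + ⨅ n : ℕ, ((n : ℝ≥0) + 1)⁻¹ • v)
        ≤ L w + L ((⨅ n : ℕ, ((n : ℝ≥0) + 1)⁻¹ • v) + ⨅ n : ℕ, ((n : ℝ≥0) + 1)⁻¹ • w) :=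
      hpeel w _
    have hT : L ((⨅ n : ℕ, ((n : ℝ≥0) + 1)⁻¹ • v) + ⨅ n : ℕ, ((n : ℝ≥0) + 1)⁻¹ • w)
        ≤ ⨅ n : ℕ, ((n : ℝ≥0) + 1)⁻¹ • (L v + L w) := by
      apply le_iInf
      intro n
      have h3 : (⨅ m : ℕ, ((m : ℝ≥0) + 1)⁻¹ • v) + (⨅ m : ℕ, ((m : ℝ≥0) + 1)⁻¹ • w)
          ≤ (((2 * n + 1 : ℕ) : ℝ≥0) + 1)⁻¹ • (v + w) := by
        rw [smul_add]
        exact c_add_le_add hle₁ (iInf_le _ (2 * n + 1)) (iInf_le _ (2 * n + 1))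
      have hc2 : (((2 * n + 1 : ℕ) : ℝ≥0) + 1)⁻¹ + (((2 * n + 1 : ℕ) : ℝ≥0) + 1)⁻¹
          = ((n : ℝ≥0) + 1)⁻¹ := by
        push_cast
        rw [← two_mul, show (2 * (n : ℝ≥0) + 1 + 1) = 2 * ((n : ℝ≥0) + 1) from by ring,
          mul_inv, ← mul_assoc, mul_inv_cancel₀ (by norm_num : (2 : ℝ≥0) ≠ 0), one_mul]
      calc L ((⨅ n : ℕ, ((n : ℝ≥0) + 1)⁻¹ • v) + ⨅ n : ℕ, ((n : ℝ≥0) + 1)⁻¹ • w)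
          ≤ L ((((2 * n + 1 : ℕ) : ℝ≥0) + 1)⁻¹ • (v + w)) := hmono h3
        _ = (((2 * n + 1 : ℕ) : ℝ≥0) + 1)⁻¹ • L (v + w) := hhom _ _
        _ ≤ (((2 * n + 1 : ℕ) : ℝ≥0) + 1)⁻¹ • ((L v + L w) + (L v + L w)) :=
            c_smul_le_smul hle₂ _ hF2G
        _ = ((n : ℝ≥0) + 1)⁻¹ • (L v + L w) := by rw [smul_add, ← add_smul, hc2]
    have hfinal : L (v + w) ≤ (L v + L w) + ⨅ n : ℕ, ((n : ℝ≥0) + 1)⁻¹ • (L v + L w) := by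
      calc L (v + w) ≤ L v + (L w + L ((⨅ n : ℕ, ((n : ℝ≥0) + 1)⁻¹ • v)
            + ⨅ n : ℕ, ((n : ℝ≥0) + 1)⁻¹ • w)) :=
          le_trans hp1 (c_add_le_add hle₂ le_rfl hp2)
        _ ≤ L v + (L w + ⨅ n : ℕ, ((n : ℝ≥0) + 1)⁻¹ • (L v + L w)) :=
          c_add_le_add hle₂ le_rfl (c_add_le_add hle₂ le_rfl hT)
        _ = (L v + L w) + ⨅ n : ℕ, ((n : ℝ≥0) + 1)⁻¹ • (L v + L w) := by abel
    exact le_trans hfinal (le_of_eq (c_add_i hle₂ hscale₂ (L v + L w)))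
  refine ⟨?_, hub₁, hub₂, ?_⟩
  · intro a b v w
    rw [hadd, hhom, hhom]
  · intro M hM h1 h2 v
    rw [hLdef v]
    apply sSup_le
    rintro z ⟨v₁, v₂, h, rfl⟩
    have hMadd : M (v₁ + v₂) = M v₁ + M v₂ := by
      have := hM 1 1 v₁ v₂; simpa using this
    calc L₁ v₁ + L₂ v₂ ≤ M v₁ + M v₂ := c_add_le_add hle₂ (h1 v₁) (h2 v₂)
      _ = M v := by rw [← hMadd, h]
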